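/- If f is (h-s)₂-convex in the second sense with s = 1 (i.e. h-convex), then (1/(b-a))∫_a^b f(x) dx ≤ [f(a)+f(b)] ∫_0^1 h(t) dt. -/

import Mathlib

open MeasureTheory

theorem h_convex_hadamard (h : ℝ → ℝ) (f : ℝ → ℝ) (a b : ℝ)
    (hh : ∀ t ∈ Set.Icc (0:ℝ) 1, 0 ≤ h t)
    (hf : ∀ x ∈ Set.Ici (0:ℝ), 0 ≤ f x)
    (hconv : ∀ x ∈ Set.Ici (0:ℝ), ∀ y ∈ Set.Ici (0:ℝ), ∀ t ∈ Set.Icc (0:ℝ) 1,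
      f (t * x + (1 - t) * y) ≤ h t * f x + h (1 - t) * f y)
    (ha : 0 ≤ a) (hab : a < b)
    (hfint : IntegrableOn f (Set.Icc a b))
    (hhint : IntegrableOn h (Set.Icc (0:ℝ) 1)) :
    (1 / (b - a)) * ∫ x in a..b, f x ≤ (f a + f b) * ∫ t in (0:ℝ)..1, h t := by
  have hba : (0:ℝ) < b - a := sub_pos.2 hab
  have hba' : b - a ≠ 0 := hba.ne'
  have hIf : IntervalIntegrable f volume a b := by
    rw [intervalIntegrable_iff_integrableOn_Icc_of_le hab.le]
    exact hfint
  have hIh : IntervalIntegrable h volume 0 1 := by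
    rw [intervalIntegrable_iff_integrableOn_Icc_of_le zero_le_one]
    exact hhint
  -- integrability of the composed map
  have hg : IntervalIntegrable (fun t => f ((b - a) * t + a)) volume 0 1 := by
    have := (hIf.comp_add_right a).comp_mul_left (c := b - a)
    simpa [hba', div_self hba'] using this
  have hIh' : IntervalIntegrable (fun t => h (1 - t)) volume 0 1 := by
    have := hIh.comp_sub_left 1
    simpa using this.symm
  have hR : IntervalIntegrable (fun t => h t * f b + h (1 - t) * f a) volume 0 1 :=
    (hIh.mul_const _).add (hIh'.mul_const _)
  -- pointwise inequality
  have hpt : ∀ t ∈ Set.Icc (0:ℝ) 1,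
      f ((b - a) * t + a) ≤ h t * f b + h (1 - t) * f a := by
    intro t ht
    have : (b - a) * t + a = t * b + (1 - t) * a := by ring
    rw [this]
    exact hconv b (le_trans ha hab.le) a ha t ht
  have hmono : (∫ t in (0:ℝ)..1, f ((b - a) * t + a)) ≤
      ∫ t in (0:ℝ)..1, h t * f b + h (1 - t) * f a :=
    intervalIntegral.integral_mono_on zero_le_one hg hR hpt
  -- compute left integral
  have hleft : (∫ t in (0:ℝ)..1, f ((b - a) * t + a)) = (b - a)⁻¹ * ∫ x in a..b, f x := by
    rw [intervalIntegral.integral_comp_mul_add f hba' a]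
    norm_num
  -- compute right integral
  have hsub : (∫ t in (0:ℝ)..1, h (1 - t)) = ∫ t in (0:ℝ)..1, h t := by
    rw [intervalIntegral.integral_comp_sub_left h 1]
    norm_num
  have hright : (∫ t in (0:ℝ)..1, h t * f b + h (1 - t) * f a)
      = (f a + f b) * ∫ t in (0:ℝ)..1, h t := by
    rw [intervalIntegral.integral_add (hIh.mul_const _) (hIh'.mul_const _),
      intervalIntegral.integral_mul_const, intervalIntegral.integral_mul_const, hsub]
    ring
  rw [one_div]
  calc (b - a)⁻¹ * ∫ x in a..b, f x = ∫ t in (0:ℝ)..1, f ((b - a) * t + a) := hleft.symm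
    _ ≤ ∫ t in (0:ℝ)..1, h t * f b + h (1 - t) * f a := hmono
    _ = (f a + f b) * ∫ t in (0:ℝ)..1, h t := hright
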